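/- For every integer n ≥ 0, the ladder L_n = P_n □ K_2 is (5,1)-total-threshold-colorable: for every subset N of its edge set there exists a (5,1)-threshold-coloring of L_n with respect to (N, E \ N). -/

import Mathlib

/-- An `(r,t)`-threshold-coloring of the graph `G` with respect to the near-far-labeling
`(N, G.edgeSet \ N)`: a coloring with colors `{0, …, r-1}` such that the colors of the
endvertices of each near edge differ by at most `t`, and the colors of the endvertices of
each far edge differ by more than `t`. -/
def IsThresholdColoring {V : Type*} (G : SimpleGraph V) (N : Set (Sym2 V))
    (r t : ℕ) (c : V → ℕ) : Prop :=
  (∀ v, c v < r) ∧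
  (∀ ⦃u v⦄, G.Adj u v → s(u, v) ∈ N → |(c u : ℤ) - (c v : ℤ)| ≤ (t : ℤ)) ∧
  (∀ ⦃u v⦄, G.Adj u v → s(u, v) ∉ N → (t : ℤ) < |(c u : ℤ) - (c v : ℤ)|)

/-- The ladder `L_n = P_n □ K_2`: the Cartesian (box) product of the path with `n` edges
(on `n+1` vertices) with the complete graph `K_2`. -/
def ladderGraph (n : ℕ) : SimpleGraph (Fin (n + 1) × Fin 2) :=
  (SimpleGraph.pathGraph (n + 1)).boxProd (⊤ : SimpleGraph (Fin 2))

/-- Near/far condition: `e = true` means the two colors are close (near edge),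
`e = false` means they are at distance at least 2 (far edge). -/
def NF (e : Bool) (x y : ℕ) : Prop :=
  if e then (x ≤ y + 1 ∧ y ≤ x + 1) else (x + 2 ≤ y ∨ y + 2 ≤ x)

instance (e : Bool) (x y : ℕ) : Decidable (NF e x y) := by unfold NF; infer_instance

lemma NF_symm {e : Bool} {x y : ℕ} (h : NF e x y) : NF e y x := by
  cases e <;> simp only [NF, if_true, if_false, Bool.false_eq_true] at h ⊢ <;> omega

lemma NF_near {x y : ℕ} (h : NF true x y) : |(x : ℤ) - (y : ℤ)| ≤ 1 := by
  simp only [NF, if_true] at h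
  rw [abs_le]; omega

lemma NF_far {x y : ℕ} (h : NF false x y) : (1 : ℤ) < |(x : ℤ) - (y : ℤ)| := by
  simp only [NF, Bool.false_eq_true, if_false] at h
  rw [lt_abs]; omega

def goodF : Bool → List ((ℕ × ℕ) × (ℕ × ℕ))
  | false => [((0,2),(0,2)), ((0,3),(0,4)), ((0,4),(1,4)), ((2,0),(2,0)),
              ((2,4),(2,4)), ((3,0),(4,0)), ((4,0),(4,1)), ((4,2),(4,2))]
  | true  => [((0,0),(0,1)), ((0,0),(1,0)), ((1,2),(1,2)), ((2,1),(2,1)),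
              ((2,3),(2,3)), ((3,2),(3,2)), ((3,4),(4,4)), ((4,3),(4,4))]

lemma goodF_ne_nil (r : Bool) : goodF r ≠ [] := by cases r <;> simp [goodF]

lemma good_col : ∀ (r : Bool), ∀ s ∈ goodF r,
    (s.1.1 < 5 ∧ s.1.2 < 5 ∧ NF r s.1.1 s.1.2) ∧
    (s.2.1 < 5 ∧ s.2.2 < 5 ∧ NF r s.2.1 s.2.2) := by decide

lemma key2 : ∀ (r r' e0 e1 : Bool), ∀ s ∈ goodF r, ∃ s' ∈ goodF r',
    ((NF e0 s.1.1 s'.1.1 ∧ NF e1 s.1.2 s'.1.2) ∨ (NF e0 s.2.1 s'.1.1 ∧ NF e1 s.2.2 s'.1.2)) ∧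
    ((NF e0 s.1.1 s'.2.1 ∧ NF e1 s.1.2 s'.2.2) ∨ (NF e0 s.2.1 s'.2.1 ∧ NF e1 s.2.2 s'.2.2)) := by
  decide

/-- `Ach rT eT m p`: there is a valid partial coloring of the first `m+1` columns of the
ladder (columns `0..m`) ending with the pair `p` in column `m`. -/
def Ach (rT : ℕ → Bool) (eT : Fin 2 → ℕ → Bool) (m : ℕ) (p : ℕ × ℕ) : Prop :=
  ∃ g : ℕ → ℕ × ℕ, g m = p ∧
    (∀ i ≤ m, (g i).1 < 5 ∧ (g i).2 < 5 ∧ NF (rT i) (g i).1 (g i).2) ∧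
    (∀ i < m, NF (eT 0 i) (g i).1 (g (i+1)).1 ∧ NF (eT 1 i) (g i).2 (g (i+1)).2)

lemma ach_base (rT : ℕ → Bool) (eT : Fin 2 → ℕ → Bool) (p : ℕ × ℕ)
    (h : p.1 < 5 ∧ p.2 < 5 ∧ NF (rT 0) p.1 p.2) : Ach rT eT 0 p := by
  refine ⟨fun _ => p, rfl, ?_, ?_⟩
  · intro i hi
    obtain rfl := Nat.le_zero.mp hi
    exact h
  · intro i hi; omega

lemma ach_step (rT : ℕ → Bool) (eT : Fin 2 → ℕ → Bool) (m : ℕ) (p q : ℕ × ℕ)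
    (hp : Ach rT eT m p)
    (hl : NF (eT 0 m) p.1 q.1 ∧ NF (eT 1 m) p.2 q.2)
    (hq : q.1 < 5 ∧ q.2 < 5 ∧ NF (rT (m + 1)) q.1 q.2) : Ach rT eT (m + 1) q := by
  obtain ⟨g, hgm, hcol, hlink⟩ := hp
  refine ⟨fun i => if i ≤ m then g i else q, by simp, ?_, ?_⟩
  · intro i hi
    dsimp only
    by_cases h : i ≤ m
    · rw [if_pos h]; exact hcol i h
    · have hieq : i = m + 1 := by omega
      subst hieq
      rw [if_neg h]; exact hq
  · intro i hi
    dsimp only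
    by_cases h : i < m
    · rw [if_pos (by omega : i ≤ m), if_pos (by omega : i + 1 ≤ m)]
      exact hlink i h
    · have hieq : i = m := by omega
      rw [hieq, if_pos (le_refl m), if_neg (by omega), hgm]
      exact hl

lemma main_claim (rT : ℕ → Bool) (eT : Fin 2 → ℕ → Bool) :
    ∀ m : ℕ, ∃ s ∈ goodF (rT m), Ach rT eT m s.1 ∧ Ach rT eT m s.2 := by
  intro m
  induction m with
  | zero =>
    obtain ⟨s, hs⟩ := List.exists_mem_of_ne_nil _ (goodF_ne_nil (rT 0))
    exact ⟨s, hs, ach_base rT eT s.1 (good_col _ s hs).1, ach_base rT eT s.2 (good_col _ s hs).2⟩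
  | succ m ih =>
    obtain ⟨s, hs, h1, h2⟩ := ih
    obtain ⟨s', hs', hl1, hl2⟩ := key2 (rT m) (rT (m + 1)) (eT 0 m) (eT 1 m) s hs
    have hq := good_col (rT (m + 1)) s' hs'
    refine ⟨s', hs', ?_, ?_⟩
    · rcases hl1 with h | h
      · exact ach_step rT eT m s.1 s'.1 h1 h hq.1
      · exact ach_step rT eT m s.2 s'.1 h2 h hq.1
    · rcases hl2 with h | h
      · exact ach_step rT eT m s.1 s'.2 h1 h hq.2
      · exact ach_step rT eT m s.2 s'.2 h2 h hq.2


/-- For every `n ≥ 0`, the ladder `L_n` is `(5,1)`-total-threshold-colorable. -/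
theorem ladder_total_threshold_colorable (n : ℕ)
    (N : Set (Sym2 (Fin (n + 1) × Fin 2))) (hN : N ⊆ (ladderGraph n).edgeSet) :
    ∃ c : Fin (n + 1) × Fin 2 → ℕ, IsThresholdColoring (ladderGraph n) N 5 1 c := by
  classical
  set rT : ℕ → Bool :=
    fun i => open Fin.NatCast in decide (s(((i : Fin (n + 1)), (0 : Fin 2)), ((i : Fin (n + 1)), (1 : Fin 2))) ∈ N)
    with hrT
  set eT : Fin 2 → ℕ → Bool :=
    fun j i => open Fin.NatCast in decide (s(((i : Fin (n + 1)), j), (((i + 1 : ℕ) : Fin (n + 1)), j)) ∈ N)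
    with heT
  obtain ⟨s, hs, h1, -⟩ := main_claim rT eT n
  obtain ⟨g, -, hcol, hlink⟩ := h1
  set c : Fin (n + 1) × Fin 2 → ℕ :=
    fun v => if v.2 = 0 then (g v.1.val).1 else (g v.1.val).2 with hc
  have hj2 : ∀ j : Fin 2, j = 0 ∨ j = 1 := by decide
  have hmain : ∀ ⦃u v : Fin (n + 1) × Fin 2⦄, (ladderGraph n).Adj u v →
      NF (decide (s(u, v) ∈ N)) (c u) (c v) := by
    rintro ⟨x, j⟩ ⟨y, k⟩ hadj
    rw [ladderGraph, SimpleGraph.boxProd_adj] at hadj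
    rcases hadj with ⟨hp, (hjk : j = k)⟩ | ⟨(ht : j ≠ k), (hxy : x = y)⟩
    · subst hjk
      rw [SimpleGraph.pathGraph_adj] at hp
      have hgoal : ∀ (a b : Fin (n + 1)), a.val + 1 = b.val →
          ∀ j' : Fin 2, NF (decide (s(((a, j') : Fin (n + 1) × Fin 2), (b, j')) ∈ N)) (c (a, j')) (c (b, j')) := by
        intro a b hab j'
        have hn : a.val < n := by have := b.isLt; omega
        have e2 : (open Fin.NatCast in ((a.val + 1 : ℕ) : Fin (n + 1))) = b := by
          rw [hab]; exact Fin.cast_val_eq_self b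
        rcases hj2 j' with rfl | rfl
        · have hl := (hlink a.val hn).1
          rw [heT] at hl
          simp only [Fin.cast_val_eq_self, e2] at hl
          show NF (decide (s(((a, (0 : Fin 2)) : Fin (n + 1) × Fin 2), (b, (0 : Fin 2))) ∈ N))
            (g a.val).1 (g b.val).1
          simpa only [← hab] using hl
        · have hl := (hlink a.val hn).2
          rw [heT] at hl
          simp only [Fin.cast_val_eq_self, e2] at hl
          show NF (decide (s(((a, (1 : Fin 2)) : Fin (n + 1) × Fin 2), (b, (1 : Fin 2))) ∈ N))
            (g a.val).2 (g b.val).2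
          simpa only [← hab] using hl
      rcases hp with hxy | hyx
      · exact hgoal x y hxy j
      · have := hgoal y x hyx j
        rw [Sym2.eq_swap] at this
        exact NF_symm this
    · subst hxy
      have hc0 := (hcol x.val (by omega)).2.2
      rw [hrT] at hc0
      simp only [Fin.cast_val_eq_self] at hc0
      rcases hj2 j with rfl | rfl <;> rcases hj2 k with rfl | rfl
      · exact absurd rfl ht
      · exact hc0
      · show NF (decide (s(((x, (1 : Fin 2)) : Fin (n + 1) × Fin 2), (x, (0 : Fin 2))) ∈ N))
          (g x.val).2 (g x.val).1
        rw [Sym2.eq_swap]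
        exact NF_symm hc0
      · exact absurd rfl ht
  refine ⟨c, ?_, ?_, ?_⟩
  · rintro ⟨x, j⟩
    have h5 := hcol x.val (by omega)
    simp only [hc]
    split
    · exact h5.1
    · exact h5.2.1
  · intro u v hadj hmem
    have h := hmain hadj
    rw [decide_eq_true hmem] at h
    exact NF_near h
  · intro u v hadj hmem
    have h := hmain hadj
    rw [decide_eq_false hmem] at h
    exact NF_far h
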